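/- arXiv:1402.0858 — 4 statements merged into one kernel-verified Lean document; each statement's English description precedes it below -/
import Mathlib

section
/- Let K be a compact topological space and f : K → ℝⁿ a continuous function that has a root. Then the set {α ≥ 0 : every continuous α-perturbation of f has a root} is nonempty, bounded above, and closed, and hence attains a maximum rob(f). -/
/-- If `f` on a compact space has a root, the set of `α ≥ 0` such that every continuous
`α`-perturbation of `f` has a root is nonempty, bounded above and closed, hence has
a maximum `rob(f)`. -/
theorem stmt_2 {K : Type*} [TopologicalSpace K] [CompactSpace K]
    {E : Type*} [NormedAddCommGroup E] [NormedSpace ℝ E] [FiniteDimensional ℝ E]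
    [Nontrivial E]
    (f : K → E) (hf : Continuous f) (hroot : ∃ x, f x = 0) :
    ({α : ℝ | 0 ≤ α ∧
        ∀ g : K → E, Continuous g → (∀ x, ‖f x - g x‖ ≤ α) → ∃ x, g x = 0}).Nonempty ∧
    BddAbove {α : ℝ | 0 ≤ α ∧
        ∀ g : K → E, Continuous g → (∀ x, ‖f x - g x‖ ≤ α) → ∃ x, g x = 0} ∧
    IsClosed {α : ℝ | 0 ≤ α ∧
        ∀ g : K → E, Continuous g → (∀ x, ‖f x - g x‖ ≤ α) → ∃ x, g x = 0} ∧
    ∃ M : ℝ, IsGreatest {α : ℝ | 0 ≤ α ∧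
        ∀ g : K → E, Continuous g → (∀ x, ‖f x - g x‖ ≤ α) → ∃ x, g x = 0} M := by
  set S : Set ℝ := {α : ℝ | 0 ≤ α ∧
      ∀ g : K → E, Continuous g → (∀ x, ‖f x - g x‖ ≤ α) → ∃ x, g x = 0} with hS
  obtain ⟨x₀, hx₀⟩ := hroot
  haveI : Nonempty K := ⟨x₀⟩
  -- 0 ∈ S
  have h0 : (0 : ℝ) ∈ S := by
    refine ⟨le_refl 0, fun g hg hb => ⟨x₀, ?_⟩⟩
    have := hb x₀
    have heq : f x₀ = g x₀ := by
      have : ‖f x₀ - g x₀‖ = 0 := le_antisymm this (norm_nonneg _)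
      rwa [norm_sub_eq_zero_iff] at this
    rw [← heq, hx₀]
  have hne : S.Nonempty := ⟨0, h0⟩
  -- bound by sup ‖f‖
  obtain ⟨z, -, hz⟩ := isCompact_univ.exists_isMaxOn Set.univ_nonempty
    (hf.norm.continuousOn)
  set C : ℝ := ‖f z‖ with hC
  have hbdd : S ⊆ Set.Iic C := by
    intro α hα
    by_contra hαC
    simp only [Set.mem_Iic, not_le] at hαC
    obtain ⟨v, hv⟩ := exists_norm_eq E (le_of_lt (sub_pos.mpr hαC))
    have hv0 : v ≠ 0 := by
      intro h
      rw [h, norm_zero] at hv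
      linarith
    obtain ⟨x, hx⟩ := hα.2 (fun _ => v) continuous_const (fun x => by
      calc ‖f x - v‖ ≤ ‖f x‖ + ‖v‖ := norm_sub_le _ _
        _ ≤ C + (α - C) := add_le_add (hz (Set.mem_univ x)) (le_of_eq hv)
        _ = α := by ring)
    exact hv0 hx
  have hBdd : BddAbove S := ⟨C, hbdd⟩
  -- closedness
  have hclosed : IsClosed S := by
    rw [← closure_subset_iff_isClosed]
    intro α hα
    have hα0 : 0 ≤ α := by
      have : α ∈ closure (Set.Ici (0:ℝ)) :=
        closure_mono (fun β hβ => hβ.1) hα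
      rwa [isClosed_Ici.closure_eq] at this
    by_contra hmem
    have hg' : ∃ g : K → E, Continuous g ∧ (∀ x, ‖f x - g x‖ ≤ α) ∧ ∀ x, g x ≠ 0 := by
      by_contra h
      push_neg at h
      exact hmem ⟨hα0, fun g hg hb => h g hg hb⟩
    obtain ⟨g, hg, hgb, hgne⟩ := hg'
    -- min of ‖g‖
    obtain ⟨w, -, hw⟩ := isCompact_univ.exists_isMinOn Set.univ_nonempty
      (hg.norm.continuousOn)
    set ε : ℝ := ‖g w‖ with hε
    have hε0 : 0 < ε := norm_pos_iff.mpr (hgne w)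
    have hαpos : 0 < α := by
      rcases hα0.lt_or_eq with h | h
      · exact h
      · exfalso
        apply hgne x₀
        have := hgb x₀
        rw [← h] at this
        have : ‖f x₀ - g x₀‖ = 0 := le_antisymm this (norm_nonneg _)
        rw [norm_sub_eq_zero_iff] at this
        rw [← this, hx₀]
    set t : ℝ := min (1/2) (ε / (2 * α)) with ht
    have ht0 : 0 < t := lt_min (by norm_num) (div_pos hε0 (by linarith))
    have ht1 : t ≤ 1/2 := min_le_left _ _
    have htα : t * α ≤ ε / 2 := by
      have := min_le_right (1/2) (ε / (2 * α))
      calc t * α ≤ (ε / (2 * α)) * α := by nlinarith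
        _ = ε / 2 := by field_simp
    set β : ℝ := (1 - t) * α with hβ
    have hβα : β < α := by nlinarith
    -- S ⊆ Iic β
    have hSβ : S ⊆ Set.Iic β := by
      intro γ hγ
      by_contra hγβ
      simp only [Set.mem_Iic, not_le] at hγβ
      obtain ⟨x, hx⟩ := hγ.2 (fun x => f x + (1 - t) • (g x - f x))
        (hf.add (((hg.sub hf)).const_smul _)) (fun x => by
          have : f x - (f x + (1 - t) • (g x - f x)) = -((1 - t) • (g x - f x)) := by
            abel
          rw [this, norm_neg, norm_smul, Real.norm_eq_abs,
            abs_of_nonneg (by linarith : (0:ℝ) ≤ 1 - t)]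
          calc (1 - t) * ‖g x - f x‖ ≤ (1 - t) * α := by
                have := hgb x
                rw [norm_sub_rev] at this
                nlinarith
            _ ≤ γ := le_of_lt hγβ)
      apply hgne x
      have hxx : g x - t • (g x - f x) = 0 := by
        have : f x + (1 - t) • (g x - f x) = g x - t • (g x - f x) := by
          rw [sub_smul, one_smul]; abel
        rw [← this]; exact hx
      have hlow : ε - t * α ≤ ‖g x - t • (g x - f x)‖ := by
        have h1 : ‖g x‖ - ‖t • (g x - f x)‖ ≤ ‖g x - t • (g x - f x)‖ :=
          norm_sub_norm_le _ _ |>.trans (le_of_eq rfl) |>.trans (le_refl _) |>.trans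
            (le_of_eq rfl)
        have h2 : ‖t • (g x - f x)‖ ≤ t * α := by
          rw [norm_smul, Real.norm_eq_abs, abs_of_pos ht0]
          have := hgb x
          rw [norm_sub_rev] at this
          nlinarith
        have h3 : ε ≤ ‖g x‖ := hw (Set.mem_univ x)
        linarith [norm_sub_norm_le (g x) (t • (g x - f x))]
      rw [hxx, norm_zero] at hlow
      nlinarith
    have : α ∈ closure (Set.Iic β) := closure_mono hSβ hα
    rw [isClosed_Iic.closure_eq] at this
    exact absurd this (not_le.mpr hβα)
  refine ⟨hne, hBdd, hclosed, sSup S, ⟨hclosed.csSup_mem hne hBdd, fun γ hγ => le_csSup hBdd hγ⟩⟩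
end

section
/- Let K be a compact space, f : K → ℝⁿ continuous with a root, and α > 0. Then f has an α-robust root (every α-perturbation of f has a root) if and only if the restriction f|_{‖f‖⁻¹{α}} : ‖f‖⁻¹{α} → ℝⁿ \ {0} admits no continuous extension F : ‖f‖⁻¹[0,α] → ℝⁿ \ {0}. -/
/-- Extendability criterion: `f` has an `α`-robust root iff the restriction of `f`
to the level set `{‖f‖ = α}` admits no nonvanishing continuous extension to the
sublevel set `{‖f‖ ≤ α}`. -/
theorem stmt_9 {K : Type*} [MetricSpace K] [CompactSpace K]
    {E : Type*} [NormedAddCommGroup E] [NormedSpace ℝ E] [FiniteDimensional ℝ E]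
    (f : K → E) (hf : Continuous f) (hroot : ∃ x, f x = 0) (α : ℝ) (hα : 0 < α) :
    (∀ g : K → E, Continuous g → (∀ x, ‖f x - g x‖ ≤ α) → ∃ x, g x = 0) ↔
      ¬ ∃ F : {x : K // ‖f x‖ ≤ α} → E, Continuous F ∧ (∀ x, F x ≠ 0) ∧
          ∀ x : {x : K // ‖f x‖ ≤ α}, ‖f (x : K)‖ = α → F x = f (x : K) := by
  constructor
  · -- robust → no nonvanishing extension
    intro h
    rintro ⟨F, hFc, hFne, hFeq⟩
    -- Tietze-extend F to all of K
    have hclosed : IsClosed {x : K | ‖f x‖ ≤ α} := isClosed_le hf.norm continuous_const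
    obtain ⟨F', hF'⟩ :=
      (⟨F, hFc⟩ : C({x : K | ‖f x‖ ≤ α}, E)).exists_restrict_eq hclosed
    have hF'eq : ∀ (x : K) (hx : ‖f x‖ ≤ α), F' x = F ⟨x, hx⟩ := by
      intro x hx
      have := ContinuousMap.congr_fun hF' ⟨x, hx⟩
      simpa using this
    set M : K → ℝ := fun x => max α ‖f x - F' x‖ with hM
    have hMpos : ∀ x, 0 < M x := fun x => lt_of_lt_of_le hα (le_max_left _ _)
    have hgc : Continuous (fun x => f x - (α / M x) • (f x - F' x)) := by
      apply hf.sub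
      apply Continuous.smul
      · exact continuous_const.div
          (continuous_const.max (hf.sub F'.continuous).norm)
          (fun x => (hMpos x).ne')
      · exact hf.sub F'.continuous
    have hdiff : ∀ x, ‖f x - (f x - (α / M x) • (f x - F' x))‖ ≤ α := by
      intro x
      rw [sub_sub_cancel, norm_smul, Real.norm_eq_abs,
        abs_of_nonneg (div_nonneg hα.le (hMpos x).le)]
      have h2 : ‖f x - F' x‖ / M x ≤ 1 :=
        (div_le_one (hMpos x)).mpr (le_max_right _ _)
      calc α / M x * ‖f x - F' x‖ = α * (‖f x - F' x‖ / M x) := by ring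
        _ ≤ α * 1 := by nlinarith
        _ = α := mul_one α
    obtain ⟨x, hx0⟩ := h _ hgc hdiff
    have hx0' : f x = (α / M x) • (f x - F' x) := sub_eq_zero.mp hx0
    have hxA : ‖f x‖ ≤ α := by
      have := hdiff x
      rwa [hx0, sub_zero] at this
    rcases le_or_gt ‖f x - F' x‖ α with hw | hw
    · have hMα : M x = α := max_eq_left hw
      rw [hMα, div_self hα.ne', one_smul] at hx0'
      have : F' x = 0 := by
        have := sub_eq_zero.mpr hx0'.symm
        simpa using this.symm
      rw [hF'eq x hxA] at this
      exact hFne ⟨x, hxA⟩ this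
    · have hMw : M x = ‖f x - F' x‖ := max_eq_right hw.le
      have hwpos : 0 < ‖f x - F' x‖ := lt_trans hα hw
      have hfα : ‖f x‖ = α := by
        rw [hx0', norm_smul, Real.norm_eq_abs, hMw,
          abs_of_nonneg (div_nonneg hα.le hwpos.le), div_mul_cancel₀ _ hwpos.ne']
      have := hFeq ⟨x, hxA⟩ hfα
      rw [← hF'eq x hxA] at this
      have hz : f x - F' x = 0 := sub_eq_zero.mpr this.symm
      rw [hz, norm_zero] at hw
      exact absurd hw (not_lt.mpr hα.le)
  · -- no nonvanishing extension → robust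
    intro hnext g hgc hgb
    by_contra hno
    push_neg at hno
    apply hnext
    set C : Set (K × ℝ) :=
      {p | p.2 ∈ Set.Icc (0 : ℝ) 1 ∧ f p.1 = p.2 • (f p.1 - g p.1)} with hC
    have hCcl : IsClosed C := by
      apply IsClosed.inter
      · exact isClosed_Icc.preimage continuous_snd
      · exact isClosed_eq (hf.comp continuous_fst)
          (continuous_snd.smul ((hf.comp continuous_fst).sub (hgc.comp continuous_fst)))
    have hCcomp : IsCompact C := by
      apply IsCompact.of_isClosed_subset (isCompact_univ.prod isCompact_Icc) hCcl
      rintro ⟨x, s⟩ ⟨hs, -⟩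
      exact ⟨Set.mem_univ _, hs⟩
    have hCne : C.Nonempty := by
      obtain ⟨x₀, hx₀⟩ := hroot
      exact ⟨(x₀, 0), ⟨Set.left_mem_Icc.mpr zero_le_one, by simp [hx₀]⟩⟩
    obtain ⟨p₀, hp₀, hmax⟩ := hCcomp.exists_isMaxOn hCne
      ((hf.comp continuous_fst).norm.continuousOn)
    set m : ℝ := ‖f p₀.1‖ with hmdef
    have hm : m < α := by
      by_contra hm'
      push_neg at hm'
      obtain ⟨⟨hs0, hs1⟩, he⟩ := hp₀
      have hd : ‖f p₀.1 - g p₀.1‖ ≤ α := hgb p₀.1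
      have h1 : m = p₀.2 * ‖f p₀.1 - g p₀.1‖ := by
        conv_lhs => rw [hmdef, he]
        rw [norm_smul, Real.norm_eq_abs, abs_of_nonneg hs0]
      have h2 : α ≤ p₀.2 * α := by nlinarith
      have hs : p₀.2 = 1 := le_antisymm hs1 (by nlinarith)
      rw [hs, one_smul] at he
      have : g p₀.1 = 0 := by
        have := sub_eq_zero.mpr he.symm
        simpa using this
      exact hno p₀.1 this
    have hαm : 0 < α - m := sub_pos.mpr hm
    set τ : K → ℝ := fun x => min 1 ((α - ‖f x‖) / (α - m)) with hτ
    refine ⟨fun x => f ↑x - τ ↑x • (f ↑x - g ↑x), ?_, ?_, ?_⟩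
    · apply Continuous.sub (hf.comp continuous_subtype_val)
      apply Continuous.smul
      · exact (continuous_const.min
          (((continuous_const.sub hf.norm).div_const _))).comp continuous_subtype_val
      · exact ((hf.sub hgc).comp continuous_subtype_val)
    · rintro ⟨x, hx⟩ h0
      simp only at h0
      have he : f x = τ x • (f x - g x) := by
        have := sub_eq_zero.mp h0
        exact this
      have hτ0 : 0 ≤ τ x :=
        le_min zero_le_one (div_nonneg (sub_nonneg.mpr hx) hαm.le)
      have hτ1 : τ x ≤ 1 := min_le_left _ _
      have hmem : (x, τ x) ∈ C := ⟨⟨hτ0, hτ1⟩, he⟩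
      have hle : ‖f x‖ ≤ m := by simpa using hmax hmem
      have hτeq : τ x = 1 := by
        apply min_eq_left
        rw [le_div_iff₀ hαm, one_mul]
        linarith
      rw [hτeq, one_smul] at he
      have : g x = 0 := by
        have := sub_eq_zero.mpr he.symm
        simpa using this
      exact hno x this
    · rintro ⟨x, hx⟩ hfx
      simp only at hfx ⊢
      have : τ x = 0 := by
        simp [hτ, hfx]
      rw [this, zero_smul, sub_zero]
end

section
/- Let K be a compact space, f : K → ℝⁿ continuous, α > 0, and suppose there exists a continuous extension F : {x : ‖f(x)‖ ≤ α} → ℝⁿ \ {0} of the restriction of f to {x : ‖f(x)‖ = α}. Then there exists a continuous α-perturbation g : K → ℝⁿ of f with no root, obtained by rescaling F by a suitable positive continuous scalar function and gluing with f outside the sublevel set. -/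
/-- If the restriction of `f` to the level set `{‖f‖ = α}` has a nonvanishing
continuous extension to the sublevel set `{‖f‖ ≤ α}`, then there is a continuous
`α`-perturbation of `f` with no root. -/
theorem stmt_10 {K : Type*} [MetricSpace K] [CompactSpace K]
    {E : Type*} [NormedAddCommGroup E] [NormedSpace ℝ E] [FiniteDimensional ℝ E]
    (f : K → E) (hf : Continuous f) (α : ℝ) (hα : 0 < α)
    (F : {x : K // ‖f x‖ ≤ α} → E) (hFc : Continuous F) (hFnz : ∀ x, F x ≠ 0)
    (hFext : ∀ x : {x : K // ‖f x‖ ≤ α}, ‖f (x : K)‖ = α → F x = f (x : K)) :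
    ∃ g : K → E, Continuous g ∧ (∀ x, ‖f x - g x‖ ≤ α) ∧ ∀ x, g x ≠ 0 := by
  set A := {x : K | ‖f x‖ ≤ α} with hA
  -- auxiliary scalar functions on the subtype
  set δ : A → ℝ := fun x => ‖f (x : K) - F x‖ with hδ
  set h : A → ℝ := fun x => α - ‖f (x : K)‖ with hh
  set p : A → ℝ := fun x => max (δ x - α) 0 with hp
  set c : A → ℝ := fun x => 1 - p x / (h x + p x) with hc
  have hδc : Continuous δ := (hf.comp continuous_subtype_val).sub hFc |>.norm
  have hhc : Continuous h := continuous_const.sub (hf.comp continuous_subtype_val).norm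
  have hpc : Continuous p := (hδc.sub continuous_const).max continuous_const
  have hh0 : ∀ x, 0 ≤ h x := fun x => by
    have : ‖f (x : K)‖ ≤ α := x.2
    simp only [hh]; linarith
  have hp0 : ∀ x, 0 ≤ p x := fun x => le_max_right _ _
  -- on the boundary, δ = 0
  have hbd : ∀ x : A, h x = 0 → δ x = 0 := by
    intro x hx
    have : ‖f (x : K)‖ = α := by have := hh0 x; simp [hh] at hx ⊢; linarith
    simp [hδ, hFext x this]
  have hbdc : ∀ x : A, h x = 0 → c x = 1 := by
    intro x hx
    have : p x = 0 := by simp [hp, hbd x hx]; linarith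
    simp [hc, this]
  -- continuity of c
  have hcc : Continuous c := by
    rw [continuous_iff_continuousAt]
    intro x
    rcases eq_or_lt_of_le (hh0 x) with hx | hx
    · -- near boundary: c is locally 1
      have hδx : δ x = 0 := hbd x hx.symm
      have : ∀ᶠ y in nhds x, c y = 1 := by
        have : ∀ᶠ y in nhds x, δ y < α := by
          have := hδc.continuousAt (x := x)
          exact this.eventually_lt continuousAt_const (by simpa [hδx])
        filter_upwards [this] with y hy
        have hpy : p y = 0 := by simp [hp]; linarith
        simp [hc, hpy]
      exact (continuousAt_const (y := (1:ℝ))).congr (by filter_upwards [this] with y hy using hy.symm)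
    · have hd : h x + p x ≠ 0 := by have := hp0 x; positivity
      exact (continuousAt_const.sub ((hpc.continuousAt).div ((hhc.add hpc).continuousAt) hd))
  have hcpos : ∀ x, 0 < c x := by
    intro x
    rcases eq_or_lt_of_le (hh0 x) with hx | hx
    · rw [hbdc x hx.symm]; norm_num
    · have hd : 0 < h x + p x := by have := hp0 x; linarith
      have : p x / (h x + p x) < 1 := (div_lt_one hd).2 (by linarith)
      simp only [hc]; linarith
  have hcle : ∀ x, c x ≤ 1 := by
    intro x
    have : 0 ≤ p x / (h x + p x) := div_nonneg (hp0 x) (by have := hh0 x; have := hp0 x; linarith)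
    simp only [hc]; linarith
  -- key estimate
  have hkey : ∀ x : A, ‖f (x : K) - c x • F x‖ ≤ α := by
    intro x
    have h1 : f (x : K) - c x • F x = (1 - c x) • f (x : K) + c x • (f (x : K) - F x) := by
      module
    have h2 : ‖f (x : K) - c x • F x‖ ≤ (1 - c x) * ‖f (x : K)‖ + c x * δ x := by
      rw [h1]
      refine (norm_add_le _ _).trans ?_
      rw [norm_smul, norm_smul, Real.norm_of_nonneg (by have := hcle x; linarith),
        Real.norm_of_nonneg (hcpos x).le]
    refine h2.trans ?_
    -- need (1-c)‖f‖ + c δ ≤ α, i.e. c (δ - α) ≤ (1-c) h  with ‖f‖ = α - h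
    have hfx : ‖f (x : K)‖ = α - h x := by simp [hh]
    rw [hfx]
    have key : c x * (δ x - α) ≤ (1 - c x) * h x := by
      rcases le_or_gt (δ x) α with hδα | hδα
      · have : c x * (δ x - α) ≤ 0 := mul_nonpos_of_nonneg_of_nonpos (hcpos x).le (by linarith)
        have : 0 ≤ (1 - c x) * h x := mul_nonneg (by have := hcle x; linarith) (hh0 x)
        linarith
      · have hpx : p x = δ x - α := max_eq_left (by linarith)
        have hd : 0 < h x + p x := by
          rcases eq_or_lt_of_le (hh0 x) with hx0 | hx0
          · exfalso; have := hbd x hx0.symm; rw [this] at hδα; linarith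
          · have := hp0 x; linarith
        have hcx : c x = h x / (h x + p x) := by
          simp only [hc]; rw [eq_div_iff hd.ne', sub_mul, div_mul_cancel₀ _ hd.ne']; ring
        have h1c : 1 - c x = p x / (h x + p x) := by
          simp only [hc]; ring
        rw [← hpx, h1c, hcx]
        rw [div_mul_eq_mul_div, div_mul_eq_mul_div, mul_comm]
    nlinarith [key]
  -- Tietze extension of x ↦ c x • F x
  have hAc : IsClosed A := isClosed_le (hf.norm) continuous_const
  obtain ⟨G, hG⟩ := ContinuousMap.exists_restrict_eq (Y := E) hAc
    ⟨fun x => c x • F x, hcc.smul hFc⟩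
  have hGA : ∀ x : A, G (x : K) = c x • F x := by
    intro x
    have := DFunLike.congr_fun hG x
    simpa using this
  refine ⟨fun x => if ‖f x‖ ≤ α then G x else f x, ?_, ?_, ?_⟩
  · apply Continuous.if_le G.continuous hf hf.norm continuous_const
    intro x hx
    have hxA : x ∈ A := le_of_eq hx
    have : h (⟨x, hxA⟩ : A) = 0 := by simp [hh, hx]
    rw [hGA ⟨x, hxA⟩, hbdc _ this, hFext ⟨x, hxA⟩ hx, one_smul]
  · intro x
    by_cases hx : ‖f x‖ ≤ α
    · simp only [hx, if_pos]
      rw [hGA ⟨x, hx⟩]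
      exact hkey ⟨x, hx⟩
    · simp [hx, hα.le]
  · intro x
    by_cases hx : ‖f x‖ ≤ α
    · simp only [hx, if_pos]
      rw [hGA ⟨x, hx⟩]
      exact smul_ne_zero (hcpos ⟨x, hx⟩).ne' (hFnz _)
    · simp only [hx, if_neg, if_false]
      intro h0
      rw [h0] at hx
      simp at hx
      linarith
end

section
/- Let K be a compact space, (f, g) : K → ℝⁿ × ℝᵏ continuous, α > 0, and equip ℝⁿ and ℝᵏ with max-norms. Let U = {x ∈ K : gᵢ(x) ≤ −α for all i = 1,…,k}. Then every α-perturbation (f̃, g̃) of the system f = 0 ∧ g ≤ 0 is satisfiable (i.e., ∃x, f̃(x)=0 and g̃(x) ≤ 0 componentwise) if and only if every continuous α-perturbation h : U → ℝⁿ of f|_U has a root in U. -/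
/-- Inequality reduction (max-norms): every `α`-perturbation of the system
`f = 0 ∧ g ≤ 0` is satisfiable iff every continuous `α`-perturbation of `f`
restricted to `U = {x | g x ≤ -α}` has a root in `U`. -/
theorem stmt_11 {K : Type*} [MetricSpace K] [CompactSpace K] (n k : ℕ)
    (f : K → Fin n → ℝ) (g : K → Fin k → ℝ) (hf : Continuous f) (hg : Continuous g)
    (α : ℝ) (hα : 0 < α) :
    (∀ (f' : K → Fin n → ℝ) (g' : K → Fin k → ℝ), Continuous f' → Continuous g' →
        (∀ x, ‖f x - f' x‖ ≤ α) → (∀ x, ‖g x - g' x‖ ≤ α) →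
        ∃ x, f' x = 0 ∧ ∀ i, g' x i ≤ 0) ↔
      (∀ h : {x : K // ∀ i, g x i ≤ -α} → Fin n → ℝ, Continuous h →
        (∀ x : {x : K // ∀ i, g x i ≤ -α}, ‖f (x : K) - h x‖ ≤ α) →
        ∃ x, h x = 0) := by
  set U : Set K := {x | ∀ i, g x i ≤ -α} with hU
  have hUclosed : IsClosed U := by
    have : U = ⋂ i, {x | g x i ≤ -α} := by ext x; simp [hU]
    rw [this]
    exact isClosed_iInter fun i =>
      isClosed_le ((continuous_apply i).comp hg) continuous_const
  constructor
  · intro H h hh hhα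
    -- extend each component of `h - f∘val` by Tietze within `Icc (-α) α`
    have hmem : ∀ (i : Fin n) (x : U), h x i - f (x : K) i ∈ Set.Icc (-α) α := by
      intro i x
      have := hhα x
      rw [pi_norm_le_iff_of_nonneg hα.le] at this
      have hi := this i
      rw [Real.norm_eq_abs, abs_le] at hi
      constructor <;> simp only [Pi.sub_apply] at hi <;> linarith [hi.1, hi.2]
    have hext : ∀ i : Fin n, ∃ G : C(K, ℝ), (∀ y, G y ∈ Set.Icc (-α) α) ∧
        ∀ x : U, G (x : K) = h x i - f (x : K) i := by
      intro i
      have hcont : Continuous fun x : U => h x i - f (x : K) i :=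
        ((continuous_apply i).comp hh).sub
          (((continuous_apply i).comp hf).comp continuous_subtype_val)
      obtain ⟨G, hG1, hG2⟩ := ContinuousMap.exists_extension_forall_mem_of_isClosedEmbedding
        ⟨_, hcont⟩ (t := Set.Icc (-α) α) (hmem i) ⟨0, by simp [hα.le]⟩
        hUclosed.isClosedEmbedding_subtypeVal
      exact ⟨G, hG1, fun x => congr_fun hG2 x⟩
    choose G hG1 hG2 using hext
    set f' : K → Fin n → ℝ := fun x i => f x i + G i x with hf'
    set g' : K → Fin k → ℝ := fun x i => g x i + α with hg'
    obtain ⟨x, hx1, hx2⟩ := H f' g'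
      (continuous_pi fun i => ((continuous_apply i).comp hf).add (G i).continuous)
      (continuous_pi fun i => ((continuous_apply i).comp hg).add continuous_const)
      (by
        intro x
        rw [pi_norm_le_iff_of_nonneg hα.le]
        intro i
        have := hG1 i x
        simp only [Pi.sub_apply, hf', Real.norm_eq_abs, abs_le, Set.mem_Icc] at *
        constructor <;> linarith [this.1, this.2])
      (by
        intro x
        rw [pi_norm_le_iff_of_nonneg hα.le]
        intro i
        simp only [Pi.sub_apply, hg', Real.norm_eq_abs]
        simp [abs_of_nonpos, hα.le])
    have hxU : x ∈ U := by
      intro i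
      have := hx2 i
      simp only [hg'] at this
      linarith
    refine ⟨⟨x, hxU⟩, ?_⟩
    funext i
    have := congr_fun hx1 i
    simp only [hf', Pi.zero_apply] at this
    have h2 := hG2 i ⟨x, hxU⟩
    simp only [Pi.zero_apply]
    linarith [this, h2]
  · intro H f' g' hf' hg' hfα hgα
    obtain ⟨x, hx⟩ := H (fun x => f' (x : K)) (hf'.comp continuous_subtype_val)
      (fun x => hfα (x : K))
    refine ⟨(x : K), hx, fun i => ?_⟩
    have h1 : g (x : K) i ≤ -α := x.2 i
    have h2 := hgα (x : K)
    rw [pi_norm_le_iff_of_nonneg hα.le] at h2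
    have := h2 i
    rw [Real.norm_eq_abs, abs_le] at this
    simp only [Pi.sub_apply] at this
    linarith [this.1]
end
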